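/- Let ρ : ℂ^{n−1} × ℂ^{n−1} → ℂ be holomorphic near 0 with ρ(0) = 0, Dρ(0) = 0, and ρ(0, χ) = 0 for all χ in a neighborhood of 0 in ℂ^{n−1}. Let F = (F', F_n) : ℂ^{n−2} × ℂ² → ℂ^{n−1} × ℂ be holomorphic near 0 with F(0) = 0, and suppose that F_n(ζ, ω) = ρ(F'(ζ, ω), conj(F'(ζ, ω))) for all (ζ, ω) ∈ N sufficiently near 0. Then the identity F_n(ζ, ω) = ρ(F'(ζ, ω), conj(F'(0, ω̄))) holds for all (ζ, ω) in a neighborhood of 0 in ℂⁿ; in particular, F_n(ζ, ω) = 0 at every point near 0 where F'(ζ, ω) = 0. (This is the content of Proposition 2.4: if ρ(0, z̄) ≡ 0 then F_n lies in the ideal generated by the components of F', so F cannot be a finite map.) -/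

import Mathlib

open Complex Filter Topology

open Metric Set
open scoped NNReal
set_option linter.unusedSectionVars false
set_option linter.unusedVariables false

section StarNorm

lemma pi_norm_star {ι : Type*} [Fintype ι] (v : ι → ℂ) : ‖star v‖ = ‖v‖ := by
  apply le_antisymm
  · apply pi_norm_le_iff_of_nonneg (norm_nonneg v) |>.2
    intro i
    simpa using norm_le_pi_norm v i
  · conv_lhs => rw [← star_star v]
    apply pi_norm_le_iff_of_nonneg (norm_nonneg (star v)) |>.2
    intro i
    simpa using norm_le_pi_norm (star v) i

lemma prod_norm_star {E F : Type*} [SeminormedAddCommGroup E] [SeminormedAddCommGroup F]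
    [StarAddMonoid E] [StarAddMonoid F]
    (hE : ∀ v : E, ‖star v‖ = ‖v‖) (hF : ∀ v : F, ‖star v‖ = ‖v‖) (p : E × F) :
    ‖star p‖ = ‖p‖ := by
  rw [Prod.norm_def, Prod.norm_def]
  show max ‖star p.1‖ ‖star p.2‖ = _
  rw [hE, hF]

end StarNorm

section ConjDiff

variable {E F : Type*} [NormedAddCommGroup E] [NormedSpace ℂ E] [StarAddMonoid E]
  [StarModule ℂ E] [ContinuousStar E]
  [NormedAddCommGroup F] [NormedSpace ℂ F] [StarAddMonoid F] [StarModule ℂ F] [ContinuousStar F]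

/-- the conjugated continuous linear map `v ↦ star (D (star v))`, which is again ℂ-linear. -/
noncomputable def conjCLM (hE : ∀ v : E, ‖star v‖ = ‖v‖) (hF : ∀ v : F, ‖star v‖ = ‖v‖)
    (D : E →L[ℂ] F) : E →L[ℂ] F :=
  LinearMap.mkContinuous
    { toFun := fun v => star (D (star v))
      map_add' := fun a b => by simp [star_add, map_add]
      map_smul' := fun c v => by
        show star (D (star (c • v))) = c • star (D (star v))
        rw [star_smul, map_smul, star_smul, star_star] }
    ‖D‖ (fun v => by
      rw [LinearMap.coe_mk]
      show ‖star (D (star v))‖ ≤ _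
      rw [hF, ← hE v]
      exact D.le_opNorm (star v))

lemma conjCLM_apply (hE : ∀ v : E, ‖star v‖ = ‖v‖) (hF : ∀ v : F, ‖star v‖ = ‖v‖)
    (D : E →L[ℂ] F) (v : E) : conjCLM hE hF D v = star (D (star v)) := rfl

lemma hasFDerivAt_star_star (hE : ∀ v : E, ‖star v‖ = ‖v‖) (hF : ∀ v : F, ‖star v‖ = ‖v‖)
    {f : E → F} {D : E →L[ℂ] F} {x : E} (hf : HasFDerivAt f D (star x)) :
    HasFDerivAt (fun y => star (f (star y))) (conjCLM hE hF D) x := by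
  rw [hasFDerivAt_iff_isLittleO_nhds_zero] at hf ⊢
  have hst : Filter.Tendsto (fun h : E => star h) (𝓝 0) (𝓝 0) := by
    simpa using (continuous_star.tendsto (0 : E))
  have h1 := hf.comp_tendsto hst
  -- h1 : (fun h => f (star x + star h) - f (star x) - D (star h)) =o[𝓝 0] fun h => star h
  rw [← Asymptotics.isLittleO_norm_left, ← Asymptotics.isLittleO_norm_right] at h1 ⊢
  have e1 : (fun h : E => ‖star (f (star (x + h))) - star (f (star x)) - conjCLM hE hF D h‖)
      = fun h : E => ‖((fun h => f (star x + h) - f (star x) - D h) ∘ fun h : E => star h) h‖ := by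
    funext h
    simp only [Function.comp_apply, conjCLM_apply, star_add]
    rw [← hF (f (star x + star h) - f (star x) - D (star h)), star_sub, star_sub]
  have e2 : (fun h : E => ‖h‖)
      = fun h : E => ‖((fun h : E => h) ∘ fun h : E => star h) h‖ := by
    funext h
    simp only [Function.comp_apply]
    rw [hE]
  rw [e1, e2]
  exact h1

lemma differentiableAt_star_star (hE : ∀ v : E, ‖star v‖ = ‖v‖) (hF : ∀ v : F, ‖star v‖ = ‖v‖)
    {f : E → F} {x : E} (hf : DifferentiableAt ℂ f (star x)) :
    DifferentiableAt ℂ (fun y => star (f (star y))) x :=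
  (hasFDerivAt_star_star hE hF hf.hasFDerivAt).differentiableAt

end ConjDiff

section OneVar

/-- identity theorem from eventual vanishing at an interior point, 1D -/
lemma oneVar_nhds {g : ℂ → ℂ} {R : ℝ} {c : ℂ} (hd : DifferentiableOn ℂ g (ball 0 R))
    (hc : c ∈ ball (0:ℂ) R) (h : g =ᶠ[𝓝 c] 0) : ∀ z ∈ ball (0:ℂ) R, g z = 0 := by
  have ha : AnalyticOnNhd ℂ g (ball 0 R) := hd.analyticOnNhd isOpen_ball
  exact fun z hz =>
    ha.eqOn_zero_of_preconnected_of_eventuallyEq_zero (convex_ball (0:ℂ) R).isPreconnected hc h hz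

/-- identity theorem from vanishing at real points, 1D -/
lemma oneVar_real {g : ℂ → ℂ} {R : ℝ} (hR : 0 < R) (hd : DifferentiableOn ℂ g (ball 0 R))
    (hreal : ∀ x : ℝ, |x| < R → g x = 0) : ∀ z ∈ ball (0:ℂ) R, g z = 0 := by
  have h0 : (0:ℂ) ∈ ball (0:ℂ) R := by simpa using hR
  have ha : AnalyticAt ℂ g 0 := (hd.analyticOnNhd isOpen_ball) 0 h0
  have hfreq : ∃ᶠ z in 𝓝[≠] (0:ℂ), g z = 0 := by
    rw [Filter.frequently_iff]
    intro U hU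
    rw [Metric.mem_nhdsWithin_iff] at hU
    obtain ⟨ε, hε, hsub⟩ := hU
    have hpos : (0:ℝ) < min ε R / 2 := by positivity
    refine ⟨(min ε R / 2 : ℝ), hsub ?_, ?_⟩
    · constructor
      · simp only [Metric.mem_ball, dist_zero_right, Complex.norm_real, Real.norm_eq_abs,
          abs_of_pos hpos]
        have := min_le_left ε R
        linarith
      · simp only [mem_compl_iff, mem_singleton_iff, Complex.ofReal_eq_zero]
        exact hpos.ne'
    · apply hreal
      rw [abs_of_pos hpos]
      have := min_le_right ε R
      linarith
  have := ha.frequently_zero_iff_eventually_zero.1 hfreq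
  exact oneVar_nhds hd h0 this

end OneVar

section LineGlob

variable {V : Type*} [NormedAddCommGroup V] [NormedSpace ℂ V]

/-- globalization along complex lines: vanishing near an interior point spreads to half the ball -/
lemma lineGlob {f : V → ℂ} {R : ℝ} {c : V} (hR : 0 < R)
    (hd : DifferentiableOn ℂ f (ball 0 R)) (hc : ‖c‖ ≤ R / 4)
    (hev : ∀ᶠ x in 𝓝 c, f x = 0) : ∀ z : V, ‖z‖ < R / 2 → f z = 0 := by
  intro z hz
  by_cases hzc : z = c
  · rw [hzc]; exact hev.self_of_nhds
  have hzc' : (0:ℝ) < ‖z - c‖ := by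
    simpa [norm_pos_iff, sub_eq_zero] using hzc
  set T : ℝ := (R - ‖c‖) / ‖z - c‖ with hT
  have hT1 : 1 < T := by
    rw [hT, lt_div_iff₀ hzc']
    have : ‖z - c‖ ≤ ‖z‖ + ‖c‖ := norm_sub_le _ _
    nlinarith
  set g : ℂ → ℂ := fun t => f (c + t • (z - c)) with hg
  have hmem : ∀ t : ℂ, t ∈ ball (0:ℂ) T → c + t • (z - c) ∈ ball (0:V) R := by
    intro t ht
    rw [mem_ball_zero_iff] at ht ⊢
    calc ‖c + t • (z - c)‖ ≤ ‖c‖ + ‖t‖ * ‖z - c‖ := by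
          refine (norm_add_le _ _).trans ?_
          rw [norm_smul]
      _ < ‖c‖ + T * ‖z - c‖ := by
          have := mul_lt_mul_of_pos_right ht hzc'
          linarith
      _ = R := by rw [hT]; field_simp; ring
  have hgd : DifferentiableOn ℂ g (ball 0 T) := by
    intro t ht
    have h1 : DifferentiableAt ℂ (fun t : ℂ => c + t • (z - c)) t :=
      (differentiableAt_const _).add (differentiableAt_id.smul_const (z - c))
    exact ((hd _ (hmem t ht)).differentiableAt
      (isOpen_ball.mem_nhds (hmem t ht))).comp t h1 |>.differentiableWithinAt
  have hgev : g =ᶠ[𝓝 (0:ℂ)] 0 := by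
    have hcont : Filter.Tendsto (fun t : ℂ => c + t • (z - c)) (𝓝 0) (𝓝 c) := by
      have : Continuous (fun t : ℂ => c + t • (z - c)) :=
        continuous_const.add (continuous_id.smul continuous_const)
      simpa using this.tendsto 0
    exact (hcont.eventually hev : ∀ᶠ t in 𝓝 (0:ℂ), f (c + t • (z - c)) = 0)
  have h0T : (0:ℂ) ∈ ball (0:ℂ) T := by simpa using lt_trans one_pos hT1
  have := oneVar_nhds hgd h0T hgev 1 (by simpa using hT1)
  simpa [hg] using this

end LineGlob

section Flat

variable {ι : Type*} [Fintype ι] [DecidableEq ι]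

lemma update_eq_affine (z : ι → ℂ) (i : ι) (w : ℂ) :
    Function.update z i w = z + (w - z i) • (Pi.single i (1:ℂ) : ι → ℂ) := by
  funext j
  by_cases hj : j = i
  · subst hj; simp
  · simp [Function.update_of_ne hj, Pi.single_apply, hj]

/-- flat totally real lemma for `ι → ℂ`: a holomorphic function vanishing on all
real points of a polydisc vanishes identically. -/
lemma flat_pi {f : (ι → ℂ) → ℂ} {R : ℝ} (hR : 0 < R)
    (hd : DifferentiableOn ℂ f (ball 0 R))
    (hreal : ∀ z ∈ ball (0 : ι → ℂ) R, (∀ i, ∃ x : ℝ, z i = x) → f z = 0) :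
    ∀ z ∈ ball (0 : ι → ℂ) R, f z = 0 := by
  suffices H : ∀ s : Finset ι, ∀ z ∈ ball (0 : ι → ℂ) R,
      (∀ i, i ∉ s → ∃ x : ℝ, z i = x) → f z = 0 by
    intro z hz
    exact H Finset.univ z hz (fun i hi => absurd (Finset.mem_univ i) hi)
  intro s
  induction s using Finset.induction_on with
  | empty =>
    intro z hz h
    exact hreal z hz (fun i => h i (Finset.notMem_empty i))
  | insert i s hi ih =>
    intro z hz h
    set g : ℂ → ℂ := fun w => f (Function.update z i w) with hg
    have hmem : ∀ w : ℂ, w ∈ ball (0:ℂ) R → Function.update z i w ∈ ball (0 : ι → ℂ) R := by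
      intro w hw
      rw [mem_ball_zero_iff, pi_norm_lt_iff hR]
      intro j
      by_cases hj : j = i
      · subst hj; simpa [mem_ball_zero_iff] using hw
      · rw [Function.update_of_ne hj]
        rw [mem_ball_zero_iff] at hz
        exact lt_of_le_of_lt (norm_le_pi_norm z j) hz
    have hgd : DifferentiableOn ℂ g (ball 0 R) := by
      intro w hw
      have h1 : DifferentiableAt ℂ (fun w : ℂ => Function.update z i w) w := by
        have : (fun w : ℂ => Function.update z i w)
            = fun w : ℂ => z + (w - z i) • (Pi.single i (1:ℂ) : ι → ℂ) := by
          funext w; exact update_eq_affine z i w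
        rw [this]
        exact (differentiableAt_const _).add
          ((differentiableAt_id.sub (differentiableAt_const _)).smul_const _)
      exact ((hd _ (hmem w hw)).differentiableAt
        (isOpen_ball.mem_nhds (hmem w hw))).comp w h1 |>.differentiableWithinAt
    have hgreal : ∀ x : ℝ, |x| < R → g x = 0 := by
      intro x hx
      apply ih _ (hmem x (by simpa [mem_ball_zero_iff, Complex.norm_real, Real.norm_eq_abs]
        using hx))
      intro j hj
      by_cases hji : j = i
      · subst hji; exact ⟨x, by simp⟩
      · rw [Function.update_of_ne hji]
        exact h j (by simp [Finset.mem_insert, hji] at hj ⊢; exact hj)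
    have := oneVar_real hR hgd hgreal (z i) (by
      rw [mem_ball_zero_iff]
      rw [mem_ball_zero_iff] at hz
      exact lt_of_le_of_lt (norm_le_pi_norm z i) hz)
    simpa [hg] using this

end Flat

section FlatProd

/-- flat totally real lemma for `ℂ × ℂ` -/
lemma flat_prod {f : ℂ × ℂ → ℂ} {R : ℝ} (hR : 0 < R)
    (hd : DifferentiableOn ℂ f (ball 0 R))
    (hreal : ∀ x y : ℝ, |x| < R → |y| < R → f (x, y) = 0) :
    ∀ p : ℂ × ℂ, ‖p.1‖ < R → ‖p.2‖ < R → f p = 0 := by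
  have hmem : ∀ a b : ℂ, ‖a‖ < R → ‖b‖ < R → (a, b) ∈ ball (0 : ℂ × ℂ) R := by
    intro a b ha hb
    rw [mem_ball_zero_iff, Prod.norm_def]
    exact max_lt ha hb
  have step1 : ∀ y : ℝ, |y| < R → ∀ a : ℂ, ‖a‖ < R → f (a, y) = 0 := by
    intro y hy
    set g : ℂ → ℂ := fun a => f (a, (y:ℂ)) with hg
    have hgd : DifferentiableOn ℂ g (ball 0 R) := by
      intro a ha
      rw [mem_ball_zero_iff] at ha
      have hmem' := hmem a y ha (by simpa [Complex.norm_real, Real.norm_eq_abs] using hy)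
      have h1 : DifferentiableAt ℂ (fun a : ℂ => (a, (y:ℂ))) a :=
        differentiableAt_id.prodMk (differentiableAt_const _)
      exact ((hd _ hmem').differentiableAt (isOpen_ball.mem_nhds hmem')).comp a h1
        |>.differentiableWithinAt
    intro a ha
    exact oneVar_real hR hgd (fun x hx => hreal x y hx hy) a (mem_ball_zero_iff.2 ha)
  intro p hp1 hp2
  set g : ℂ → ℂ := fun b => f (p.1, b) with hg
  have hgd : DifferentiableOn ℂ g (ball 0 R) := by
    intro b hb
    rw [mem_ball_zero_iff] at hb
    have hmem' := hmem p.1 b hp1 hb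
    have h1 : DifferentiableAt ℂ (fun b : ℂ => (p.1, b)) b :=
      (differentiableAt_const _).prodMk differentiableAt_id
    exact ((hd _ hmem').differentiableAt (isOpen_ball.mem_nhds hmem')).comp b h1
      |>.differentiableWithinAt
  have := oneVar_real hR hgd (fun x hx =>
    step1 x hx p.1 hp1) p.2 (mem_ball_zero_iff.2 hp2)
  simpa [hg] using this

end FlatProd

section SchwarzLip

variable {V W : Type*} [NormedAddCommGroup V] [NormedSpace ℂ V]
  [NormedAddCommGroup W] [NormedSpace ℂ W]

/-- Cauchy/Schwarz-type estimate: a holomorphic function small on a ball is Lipschitz-small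
on a much smaller ball. -/
lemma lipschitz_of_small {θ : V → W} {R ε : ℝ} (hR : 0 < R) (hε : 0 < ε)
    (hd : DifferentiableOn ℂ θ (ball 0 R)) (hb : ∀ τ ∈ ball (0:V) R, ‖θ τ‖ ≤ ε)
    {τ τ' : V} (hτ : ‖τ‖ ≤ R / 8) (hτ' : ‖τ'‖ ≤ R / 8) :
    ‖θ τ - θ τ'‖ ≤ 6 * ε / R * ‖τ - τ'‖ := by
  by_cases hne : τ = τ'
  · simp [hne]
  have hd0 : (0:ℝ) < ‖τ - τ'‖ := by simpa [norm_pos_iff, sub_eq_zero] using hne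
  set T : ℝ := R / (2 * ‖τ - τ'‖) with hT
  have hT1 : 1 < T := by
    rw [hT, lt_div_iff₀ (by positivity)]
    have : ‖τ - τ'‖ ≤ ‖τ‖ + ‖τ'‖ := norm_sub_le _ _
    nlinarith
  set g : ℂ → W := fun t => θ (τ' + t • (τ - τ')) with hg
  have hmem : ∀ t : ℂ, t ∈ ball (0:ℂ) T → τ' + t • (τ - τ') ∈ ball (0:V) R := by
    intro t ht
    rw [mem_ball_zero_iff] at ht ⊢
    calc ‖τ' + t • (τ - τ')‖ ≤ ‖τ'‖ + ‖t‖ * ‖τ - τ'‖ := by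
          refine (norm_add_le _ _).trans ?_; rw [norm_smul]
      _ < R / 8 + T * ‖τ - τ'‖ := by
          have := mul_lt_mul_of_pos_right ht hd0
          linarith
      _ ≤ R := by
          rw [hT]
          have : R / (2 * ‖τ - τ'‖) * ‖τ - τ'‖ = R / 2 := by field_simp
          rw [this]; linarith
  have hgd : DifferentiableOn ℂ g (ball 0 T) := by
    intro t ht
    have h1 : DifferentiableAt ℂ (fun t : ℂ => τ' + t • (τ - τ')) t :=
      (differentiableAt_const _).add (differentiableAt_id.smul_const _)
    exact ((hd _ (hmem t ht)).differentiableAt (isOpen_ball.mem_nhds (hmem t ht))).comp t h1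
      |>.differentiableWithinAt
  have hmaps : MapsTo g (ball 0 T) (ball (g 0) (3 * ε)) := by
    intro t ht
    rw [mem_ball]
    have h0mem : (0:V) + ((0:ℂ)) • (τ - τ') ∈ ball (0:V) R := by
      simpa using (by positivity : (0:ℝ) < R)
    have hb1 : ‖g t‖ ≤ ε := hb _ (hmem t ht)
    have hb2 : ‖g 0‖ ≤ ε := by
      apply hb
      rw [mem_ball_zero_iff]
      simp only [hg, zero_smul, add_zero]
      exact lt_of_le_of_lt hτ' (by linarith)
    calc dist (g t) (g 0) ≤ ‖g t‖ + ‖g 0‖ := dist_le_norm_add_norm _ _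
      _ ≤ 2 * ε := by linarith
      _ < 3 * ε := by linarith
  have hds := Complex.norm_dslope_le_div_of_mapsTo_ball hgd (hmaps.mono_right ball_subset_closedBall)
    (show (1:ℂ) ∈ ball 0 T by simpa using hT1)
  rw [dslope_of_ne g (by norm_num : (1:ℂ) ≠ 0)] at hds
  rw [slope_def_module] at hds
  simp only [sub_zero, inv_one, one_smul] at hds
  have : g 1 = θ τ := by simp [hg]
  have h0 : g 0 = θ τ' := by simp [hg]
  rw [this, h0] at hds
  calc ‖θ τ - θ τ'‖ ≤ 3 * ε / T := hds
    _ = 6 * ε / R * ‖τ - τ'‖ := by rw [hT]; field_simp; ring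

end SchwarzLip

section StageA

local notation "W" => ℂ × ℂ

lemma norm_star_W (p : W) : ‖star p‖ = ‖p‖ := by
  rw [Prod.norm_def, Prod.norm_def]
  show max ‖star p.1‖ ‖star p.2‖ = _
  rw [norm_star, norm_star]

lemma stageA {A : W → W} {h : W → ℂ} {R ε : ℝ}
    (hR : 0 < R) (hε : 0 < ε) (hεR : ε ≤ R / 100)
    (hA : DifferentiableOn ℂ A (ball 0 R))
    (hh : DifferentiableOn ℂ h (ball 0 R))
    (hinv : ∀ τ : W, ‖τ‖ < R → A (star (A τ)) = star τ)
    (hsmall : ∀ τ : W, ‖τ‖ < R → ‖A τ - τ‖ ≤ ε)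
    (hvan : ∀ τ : W, ‖τ‖ < R → A τ = star τ → h τ = 0) :
    ∀ τ : W, ‖τ‖ < R / 2 → h τ = 0 := by
  classical
  set η : W → W := fun τ => (2:ℂ)⁻¹ • (A τ - τ) with hηdef
  set φ : W → W := fun τ => τ + η τ with hφdef
  -- differentiability of η and φ on ball 0 R
  have hηd : DifferentiableOn ℂ η (ball 0 R) :=
    by have := (hA.sub (differentiable_id.differentiableOn)).const_smul ((2:ℂ)⁻¹); exact this
  have hφd : DifferentiableOn ℂ φ (ball 0 R) :=
    (differentiable_id.differentiableOn).add hηd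
  -- 1. Lipschitz estimate for η
  have hθlip : ∀ τ τ' : W, ‖τ‖ ≤ R/8 → ‖τ'‖ ≤ R/8 →
      ‖η τ - η τ'‖ ≤ 3 * ε / R * ‖τ - τ'‖ := by
    intro τ τ' hτ hτ'
    have := lipschitz_of_small (θ := fun τ => A τ - τ) hR hε
      (hA.sub differentiable_id.differentiableOn)
      (fun τ hτ => hsmall τ (mem_ball_zero_iff.1 hτ)) hτ hτ'
    have h6 : ‖(A τ - τ) - (A τ' - τ')‖ ≤ 6 * ε / R * ‖τ - τ'‖ := by simpa using this
    have heq : η τ - η τ' = (2:ℂ)⁻¹ • ((A τ - τ) - (A τ' - τ')) := by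
      simp only [hηdef, smul_sub]
    rw [heq, norm_smul]
    have h2 : ‖(2:ℂ)⁻¹‖ = 2⁻¹ := by norm_num
    rw [h2]
    have h7 : 2⁻¹ * ‖A τ - τ - (A τ' - τ')‖ ≤ 2⁻¹ * (6 * ε / R * ‖τ - τ'‖) := by linarith
    calc 2⁻¹ * ‖A τ - τ - (A τ' - τ')‖ ≤ 2⁻¹ * (6 * ε / R * ‖τ - τ'‖) := h7
      _ = 3 * ε / R * ‖τ - τ'‖ := by ring
  have hεsmall : 3 * ε / R ≤ 3 / 100 := by
    rw [div_le_iff₀ hR]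
    nlinarith
  -- 2. ApproximatesLinearOn
  set s : Set W := ball 0 (R/8) with hsdef
  have happrox : ApproximatesLinearOn φ
      ((ContinuousLinearEquiv.refl ℂ W : W ≃L[ℂ] W) : W →L[ℂ] W) s (1/4 : ℝ≥0) := by
    intro x hx y hy
    have hx' : ‖x‖ ≤ R/8 := le_of_lt (mem_ball_zero_iff.1 hx)
    have hy' : ‖y‖ ≤ R/8 := le_of_lt (mem_ball_zero_iff.1 hy)
    have : φ x - φ y - (ContinuousLinearEquiv.refl ℂ W : W →L[ℂ] W) (x - y) = η x - η y := by
      simp [hφdef]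
      abel
    rw [this]
    have := hθlip x y hx' hy'
    have hc : (3:ℝ) * ε / R * ‖x - y‖ ≤ 1/4 * ‖x - y‖ := by
      have := norm_nonneg (x - y)
      nlinarith
    calc ‖η x - η y‖ ≤ 3 * ε / R * ‖x - y‖ := hθlip x y hx' hy'
      _ ≤ 1/4 * ‖x - y‖ := hc
      _ = ((1/4 : ℝ≥0) : ℝ) * ‖x - y‖ := by norm_num
  have hNinv : ‖((ContinuousLinearEquiv.refl ℂ W).symm : W →L[ℂ] W)‖₊ = 1 := by
    rw [ContinuousLinearEquiv.refl_symm, ContinuousLinearEquiv.coe_refl,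
      ContinuousLinearMap.nnnorm_id]
  have hc4 : Subsingleton W ∨ (1/4 : ℝ≥0) <
      ‖((ContinuousLinearEquiv.refl ℂ W).symm : W →L[ℂ] W)‖₊⁻¹ := by
    right
    rw [hNinv]
    rw [← NNReal.coe_lt_coe]
    push_cast
    norm_num
  set Φ := happrox.toOpenPartialHomeomorph φ s hc4 isOpen_ball with hΦdef
  have hΦcoe : (Φ : W → W) = φ := rfl
  have hΦsource : Φ.source = s := rfl
  -- surjectivity info
  have hsurj : SurjOn φ (closedBall 0 (R/16))
      (closedBall (φ 0) ((((ContinuousLinearEquiv.refl ℂ W).toNonlinearRightInverse.nnnorm :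
        ℝ)⁻¹ - (1/4 : ℝ≥0)) * (R/16))) := by
    apply happrox.surjOn_closedBall_of_nonlinearRightInverse
      (ContinuousLinearEquiv.refl ℂ W).toNonlinearRightInverse (by positivity)
    intro x hx
    rw [mem_closedBall_zero_iff] at hx
    rw [hsdef, mem_ball_zero_iff]
    linarith
  have hnn : ((ContinuousLinearEquiv.refl ℂ W).toNonlinearRightInverse.nnnorm : ℝ) = 1 := by
    show ((‖((ContinuousLinearEquiv.refl ℂ W).symm : W →L[ℂ] W)‖₊ : ℝ)) = 1
    rw [hNinv]
    norm_num
  have hφ0 : ‖φ 0‖ ≤ ε / 2 := by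
    have h1 : ‖A 0 - 0‖ ≤ ε := hsmall 0 (by simpa using hR)
    have h3 : φ 0 = (2:ℂ)⁻¹ • (A 0 - 0) := by simp [hφdef, hηdef]
    rw [h3, norm_smul]
    have h2 : ‖(2:ℂ)⁻¹‖ = 2⁻¹ := by norm_num
    rw [h2]
    linarith [norm_nonneg (A 0 - 0)]
  -- key: for σ in the small ball B, the inverse lands in closedBall 0 (R/16)
  set B : Set W := ball 0 (R/64) with hBdef
  have hBsub : ∀ σ ∈ B, σ ∈ closedBall (φ 0)
      ((((ContinuousLinearEquiv.refl ℂ W).toNonlinearRightInverse.nnnorm : ℝ)⁻¹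
        - (1/4 : ℝ≥0)) * (R/16)) := by
    intro σ hσ
    rw [hBdef, mem_ball_zero_iff] at hσ
    rw [mem_closedBall]
    have : dist σ (φ 0) ≤ ‖σ‖ + ‖φ 0‖ := by
      rw [dist_eq_norm]
      exact (norm_sub_le _ _)
    rw [hnn]
    push_cast
    nlinarith
  have hψspec : ∀ σ ∈ B, Φ.symm σ ∈ closedBall 0 (R/16) ∧ φ (Φ.symm σ) = σ := by
    intro σ hσ
    obtain ⟨τ', hτ'mem, hτ'eq⟩ := hsurj (hBsub σ hσ)
    have hτ's : τ' ∈ Φ.source := by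
      rw [hΦsource, hsdef, mem_ball_zero_iff]
      rw [mem_closedBall_zero_iff] at hτ'mem
      linarith
    have : Φ.symm σ = τ' := by
      rw [← hτ'eq]
      exact Φ.left_inv hτ's
    rw [this]
    exact ⟨hτ'mem, hτ'eq⟩
  have hBtarget : B ⊆ Φ.target := by
    intro σ hσ
    obtain ⟨τ', hτ'mem, hτ'eq⟩ := hsurj (hBsub σ hσ)
    have hτ's : τ' ∈ Φ.source := by
      rw [hΦsource, hsdef, mem_ball_zero_iff]
      rw [mem_closedBall_zero_iff] at hτ'mem
      linarith
    rw [← hτ'eq]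
    exact Φ.map_source hτ's
  -- differentiability of Φ.symm on B
  have hψdiff : ∀ σ ∈ B, DifferentiableAt ℂ Φ.symm σ := by
    intro σ hσ
    have hσt : σ ∈ Φ.target := hBtarget hσ
    set τ := Φ.symm σ with hτdef
    have hτs : τ ∈ Φ.source := Φ.map_target hσt
    have hτball : τ ∈ ball (0:W) R := by
      rw [hΦsource, hsdef, mem_ball_zero_iff] at hτs
      rw [mem_ball_zero_iff]
      linarith
    -- derivative of η at τ
    have hηdiffAt : DifferentiableAt ℂ η τ :=
      (hηd τ hτball).differentiableAt (isOpen_ball.mem_nhds hτball)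
    set Dη := fderiv ℂ η τ with hDηdef
    have hηlipOn : LipschitzOnWith (1/8 : ℝ≥0) η s := by
      rw [lipschitzOnWith_iff_dist_le_mul]
      intro a ha b hb
      rw [dist_eq_norm, dist_eq_norm]
      have := hθlip a b (le_of_lt (mem_ball_zero_iff.1 ha)) (le_of_lt (mem_ball_zero_iff.1 hb))
      have hc : (3:ℝ) * ε / R * ‖a - b‖ ≤ 1/8 * ‖a - b‖ := by
        have := norm_nonneg (a - b)
        nlinarith
      calc ‖η a - η b‖ ≤ 3 * ε / R * ‖a - b‖ := this
        _ ≤ 1/8 * ‖a - b‖ := hc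
        _ = ((1/8 : ℝ≥0) : ℝ) * ‖a - b‖ := by norm_num
    have hDηle : ‖Dη‖ ≤ 1/8 := by
      have := hηdiffAt.hasFDerivAt.le_of_lipschitzOn
        (isOpen_ball.mem_nhds (by rwa [hΦsource] at hτs)) hηlipOn
      calc ‖Dη‖ ≤ ((1/8 : ℝ≥0) : ℝ) := this
        _ = 1/8 := by norm_num
    have hu : ‖-Dη‖ < 1 := by
      rw [norm_neg]
      linarith
    set u : (W →L[ℂ] W)ˣ := Units.oneSub (-Dη) hu with hudef
    set e : W ≃L[ℂ] W := ContinuousLinearEquiv.unitsEquiv ℂ W u with hedef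
    have hecoe : (e : W →L[ℂ] W) = ContinuousLinearMap.id ℂ W + Dη := by
      show (u : W →L[ℂ] W) = _
      rw [hudef, Units.val_oneSub]
      rw [sub_neg_eq_add]
      rfl
    have hφDeriv : HasFDerivAt φ (e : W →L[ℂ] W) τ := by
      rw [hecoe]
      exact (hasFDerivAt_id τ).add hηdiffAt.hasFDerivAt
    have hcont : ContinuousAt Φ.symm σ := Φ.symm.continuousAt (by rwa [Φ.symm_source])
    have hfg : ∀ᶠ y in 𝓝 σ, φ (Φ.symm y) = y := by
      filter_upwards [Φ.open_target.mem_nhds hσt] with y hy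
      exact Φ.right_inv hy
    exact (hφDeriv.of_local_left_inverse hcont hfg).differentiableAt
  -- h ∘ Φ.symm vanishes at real points of B
  have hrealvan : ∀ x y : ℝ, |x| < R/64 → |y| < R/64 → h (Φ.symm ((x:ℂ), (y:ℂ))) = 0 := by
    intro x y hx hy
    set σ : W := ((x:ℂ), (y:ℂ)) with hσdef
    have hσB : σ ∈ B := by
      rw [hBdef, mem_ball_zero_iff, Prod.norm_def]
      apply max_lt
      · simpa [hσdef, Complex.norm_real, Real.norm_eq_abs] using hx
      · simpa [hσdef, Complex.norm_real, Real.norm_eq_abs] using hy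
    obtain ⟨hτ'mem, hτ'eq⟩ := hψspec σ hσB
    set τ' := Φ.symm σ with hτ'def
    have hτ'16 : ‖τ'‖ ≤ R/16 := mem_closedBall_zero_iff.1 hτ'mem
    have hτ'R : ‖τ'‖ < R := by linarith
    -- φ (star (A τ')) = star (φ τ')
    have hkey : φ (star (A τ')) = star (φ τ') := by
      have hi := hinv τ' hτ'R
      simp only [hφdef, hηdef]
      rw [hi]
      have hstar2 : star ((2:ℂ)⁻¹) = (2:ℂ)⁻¹ := by
        simp
      rw [star_add, star_smul, star_sub, hstar2]
      module
    have hσreal : star σ = σ := by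
      rw [hσdef]
      show (star (x:ℂ), star (y:ℂ)) = _
      simp [Complex.star_def, Complex.conj_ofReal]
    have hιsource : star (A τ') ∈ s := by
      rw [hsdef, mem_ball_zero_iff, norm_star_W]
      have h1 : ‖A τ' - τ'‖ ≤ ε := hsmall τ' hτ'R
      have h2 : ‖A τ'‖ ≤ ‖τ'‖ + ε := by
        calc ‖A τ'‖ = ‖τ' + (A τ' - τ')‖ := by ring_nf
          _ ≤ ‖τ'‖ + ‖A τ' - τ'‖ := norm_add_le _ _
          _ ≤ ‖τ'‖ + ε := by linarith
      linarith
    have hτ'source : τ' ∈ s := by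
      rw [hsdef, mem_ball_zero_iff]
      linarith
    have heq : star (A τ') = τ' := by
      apply happrox.injOn hc4 hιsource hτ'source
      show φ (star (A τ')) = φ τ'
      rw [hkey]
      rw [hτ'eq]
      rw [hσreal]
    have hAfix : A τ' = star τ' :=
      (star_star (A τ')).symm.trans (congrArg star heq)
    exact hvan τ' hτ'R hAfix
  -- flat lemma on B
  have hcompd : DifferentiableOn ℂ (fun σ => h (Φ.symm σ)) B := by
    intro σ hσ
    have hσt : σ ∈ Φ.target := hBtarget hσ
    have hτs : Φ.symm σ ∈ Φ.source := Φ.map_target hσt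
    have hτball : Φ.symm σ ∈ ball (0:W) R := by
      rw [hΦsource, hsdef, mem_ball_zero_iff] at hτs
      rw [mem_ball_zero_iff]
      linarith
    exact (((hh _ hτball).differentiableAt (isOpen_ball.mem_nhds hτball)).comp σ
      (hψdiff σ hσ)).differentiableWithinAt
  have hflat : ∀ σ : W, ‖σ.1‖ < R/64 → ‖σ.2‖ < R/64 → h (Φ.symm σ) = 0 := by
    apply flat_prod (by positivity : (0:ℝ) < R/64) hcompd
    intro x y hx hy
    exact hrealvan x y hx hy
  -- transfer back: h vanishes on open set V
  set V : Set W := Φ.source ∩ φ ⁻¹' B with hVdef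
  have hVopen : IsOpen V := by
    apply ContinuousOn.isOpen_inter_preimage happrox.continuousOn isOpen_ball
    exact isOpen_ball
  have hVvan : ∀ τ ∈ V, h τ = 0 := by
    intro τ hτ
    obtain ⟨hτs, hτpre⟩ := hτ
    have : Φ.symm (φ τ) = τ := Φ.left_inv hτs
    have hφτ : (φ τ).1 ∈ ball (0:ℂ) (R/64) ∧ (φ τ).2 ∈ ball (0:ℂ) (R/64) := by
      have := hτpre
      rw [mem_preimage, hBdef, mem_ball_zero_iff, Prod.norm_def] at this
      constructor <;> rw [mem_ball_zero_iff]
      · exact lt_of_le_of_lt (le_max_left _ _) this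
      · exact lt_of_le_of_lt (le_max_right _ _) this
    have := hflat (φ τ) (mem_ball_zero_iff.1 hφτ.1) (mem_ball_zero_iff.1 hφτ.2)
    have hli : Φ.symm (φ τ) = τ := Φ.left_inv hτs
    rw [hli] at this
    exact this
  -- τ₀ := Φ.symm 0 ∈ V
  have h0B : (0:W) ∈ B := by
    rw [hBdef, mem_ball_zero_iff]
    simpa using (by positivity : (0:ℝ) < R/64)
  obtain ⟨hτ₀mem, hτ₀eq⟩ := hψspec 0 h0B
  set τ₀ := Φ.symm 0 with hτ₀def
  have hτ₀V : τ₀ ∈ V := by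
    constructor
    · exact Φ.map_target (hBtarget h0B)
    · rw [mem_preimage, hτ₀eq]
      exact h0B
  have hev : ∀ᶠ τ in 𝓝 τ₀, h τ = 0 := by
    filter_upwards [hVopen.mem_nhds hτ₀V] with τ hτ
    exact hVvan τ hτ
  -- globalize
  have hτ₀4 : ‖τ₀‖ ≤ R / 4 := by
    have := mem_closedBall_zero_iff.1 hτ₀mem
    linarith
  exact lineGlob hR hh hτ₀4 hev

end StageA


set_option maxHeartbeats 1000000 in
open Metric in
theorem stmt7 (n : ℕ) (hn : 3 ≤ n)
    (ρ : (Fin (n - 1) → ℂ) × (Fin (n - 1) → ℂ) → ℂ)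
    (hρ : ∀ᶠ x in 𝓝 (0 : (Fin (n - 1) → ℂ) × (Fin (n - 1) → ℂ)), DifferentiableAt ℂ ρ x)
    (hρ0 : ρ 0 = 0) (hdρ0 : fderiv ℂ ρ 0 = 0)
    (hρvan : ∀ᶠ χ in 𝓝 (0 : Fin (n - 1) → ℂ), ρ (0, χ) = 0)
    (r : (Fin (n - 2) → ℂ) × (Fin (n - 2) → ℂ) × (ℂ × ℂ) → ℂ × ℂ)
    (hr : ∀ᶠ x in 𝓝 (0 : (Fin (n - 2) → ℂ) × (Fin (n - 2) → ℂ) × (ℂ × ℂ)),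
      DifferentiableAt ℂ r x)
    (hrnorm : ∀ᶠ p in 𝓝 (0 : (Fin (n - 2) → ℂ) × (ℂ × ℂ)),
      r (p.1, 0, p.2) = p.2 ∧ r (0, p.1, p.2) = p.2)
    (hrreal : ∀ᶠ p in 𝓝 (0 : (Fin (n - 2) → ℂ) × (Fin (n - 2) → ℂ) × (ℂ × ℂ)),
      r (p.1, p.2.1, star (r (star p.2.1, star p.1, star p.2.2))) = p.2.2)
    (F' : (Fin (n - 2) → ℂ) × (ℂ × ℂ) → (Fin (n - 1) → ℂ))
    (Fn : (Fin (n - 2) → ℂ) × (ℂ × ℂ) → ℂ)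
    (hF' : ∀ᶠ x in 𝓝 (0 : (Fin (n - 2) → ℂ) × (ℂ × ℂ)), DifferentiableAt ℂ F' x)
    (hFn : ∀ᶠ x in 𝓝 (0 : (Fin (n - 2) → ℂ) × (ℂ × ℂ)), DifferentiableAt ℂ Fn x)
    (hF'0 : F' 0 = 0) (hFn0 : Fn 0 = 0)
    (hCR : ∀ᶠ p in 𝓝 (0 : (Fin (n - 2) → ℂ) × (ℂ × ℂ)),
      p.2 = r (p.1, star p.1, star p.2) → Fn p = ρ (F' p, star (F' p))) :
    (∀ᶠ p in 𝓝 (0 : (Fin (n - 2) → ℂ) × (ℂ × ℂ)),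
      Fn p = ρ (F' p, star (F' (0, star p.2)))) ∧
    (∀ᶠ p in 𝓝 (0 : (Fin (n - 2) → ℂ) × (ℂ × ℂ)), F' p = 0 → Fn p = 0) := by
  classical
  -- notation: E := Fin (n-2) → ℂ, W := ℂ × ℂ, X := E × W, Y := E × X, P := Fin (n-1) → ℂ
  -- star-norm facts
  have hnE : ∀ v : Fin (n - 2) → ℂ, ‖star v‖ = ‖v‖ := pi_norm_star
  have hnP : ∀ v : Fin (n - 1) → ℂ, ‖star v‖ = ‖v‖ := pi_norm_star
  have hnW : ∀ v : ℂ × ℂ, ‖star v‖ = ‖v‖ :=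
    prod_norm_star (fun z => norm_star z) (fun z => norm_star z)
  have hnX : ∀ v : (Fin (n - 2) → ℂ) × (ℂ × ℂ), ‖star v‖ = ‖v‖ := prod_norm_star hnE hnW
  -- conjugated F'
  set G' : (Fin (n - 2) → ℂ) × (ℂ × ℂ) → (Fin (n - 1) → ℂ) :=
    fun x => star (F' (star x)) with hG'def
  have hG'0 : G' 0 = 0 := by
    simp only [hG'def]
    rw [show star (0 : (Fin (n - 2) → ℂ) × (ℂ × ℂ)) = 0 from star_zero _, hF'0, star_zero]
  have hG' : ∀ᶠ x in 𝓝 (0 : (Fin (n - 2) → ℂ) × (ℂ × ℂ)), DifferentiableAt ℂ G' x := by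
    have hstarcont : Continuous (fun x : (Fin (n - 2) → ℂ) × (ℂ × ℂ) => star x) :=
      continuous_star
    have htend : Filter.Tendsto (fun x : (Fin (n - 2) → ℂ) × (ℂ × ℂ) => star x)
        (𝓝 0) (𝓝 0) := by
      simpa using hstarcont.tendsto 0
    filter_upwards [htend.eventually hF'] with x hx
    exact differentiableAt_star_star hnX hnP hx
  -- r is 0 at 0
  have hr0 : r 0 = 0 := by
    have := hrnorm.self_of_nhds
    exact this.2
  -- the complexified defect function Ψ
  set Ψ : (Fin (n - 2) → ℂ) × (Fin (n - 2) → ℂ) × (ℂ × ℂ) → ℂ :=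
    fun y => Fn (y.1, r y) - ρ (F' (y.1, r y), G' y.2) with hΨdef
  -- eventual differentiability of Ψ
  have hΨdiff : ∀ᶠ y in 𝓝 (0 : (Fin (n - 2) → ℂ) × (Fin (n - 2) → ℂ) × (ℂ × ℂ)),
      DifferentiableAt ℂ Ψ y := by
    have hrc : ContinuousAt r 0 := hr.self_of_nhds.continuousAt
    have htend1 : Filter.Tendsto
        (fun y : (Fin (n - 2) → ℂ) × (Fin (n - 2) → ℂ) × (ℂ × ℂ) => ((y.1, r y) :
          (Fin (n - 2) → ℂ) × (ℂ × ℂ))) (𝓝 0) (𝓝 0) := by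
      have : Filter.Tendsto r (𝓝 (0 : (Fin (n - 2) → ℂ) × (Fin (n - 2) → ℂ) × (ℂ × ℂ)))
          (𝓝 0) := by
        have := hrc.tendsto
        rwa [hr0] at this
      exact Filter.Tendsto.prodMk_nhds continuousAt_fst.tendsto this
    have htend2 : Filter.Tendsto
        (fun y : (Fin (n - 2) → ℂ) × (Fin (n - 2) → ℂ) × (ℂ × ℂ) => y.2) (𝓝 0) (𝓝 0) :=
      continuousAt_snd.tendsto
    have htend3 : Filter.Tendsto
        (fun y : (Fin (n - 2) → ℂ) × (Fin (n - 2) → ℂ) × (ℂ × ℂ) =>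
          ((F' (y.1, r y), G' y.2) : (Fin (n - 1) → ℂ) × (Fin (n - 1) → ℂ)))
        (𝓝 0) (𝓝 0) := by
      have hF'c : ContinuousAt F' 0 := hF'.self_of_nhds.continuousAt
      have hG'c : ContinuousAt G' 0 := hG'.self_of_nhds.continuousAt
      have t1 := (hF'c.tendsto.comp htend1)
      have t2 := (hG'c.tendsto.comp htend2)
      rw [hF'0] at t1
      rw [hG'0] at t2
      exact t1.prodMk_nhds t2
    filter_upwards [hr, htend1.eventually hFn, htend1.eventually hF',
      htend2.eventually hG', htend3.eventually hρ] with y h1 h2 h3 h4 h5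
    have hinner : DifferentiableAt ℂ
        (fun y : (Fin (n - 2) → ℂ) × (Fin (n - 2) → ℂ) × (ℂ × ℂ) => ((y.1, r y) :
          (Fin (n - 2) → ℂ) × (ℂ × ℂ))) y := differentiableAt_fst.prodMk h1
    have hd1 : DifferentiableAt ℂ
        (fun y : (Fin (n - 2) → ℂ) × (Fin (n - 2) → ℂ) × (ℂ × ℂ) => Fn (y.1, r y)) y :=
      h2.comp y hinner
    have hd2 : DifferentiableAt ℂ
        (fun y : (Fin (n - 2) → ℂ) × (Fin (n - 2) → ℂ) × (ℂ × ℂ) =>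
          ρ (F' (y.1, r y), G' y.2)) y :=
      h5.comp y ((h3.comp y hinner).prodMk (h4.comp y differentiableAt_snd))
    exact hd1.sub hd2
  -- extract balls for all the eventual hypotheses
  obtain ⟨δ1, hδ1, hrball⟩ := Metric.eventually_nhds_iff_ball.1 hr
  obtain ⟨δΨ, hδΨ, hΨball⟩ := Metric.eventually_nhds_iff_ball.1 hΨdiff
  obtain ⟨δnorm, hδnorm, hnormball⟩ := Metric.eventually_nhds_iff_ball.1 hrnorm
  obtain ⟨δreal, hδreal, hrealball⟩ := Metric.eventually_nhds_iff_ball.1 hrreal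
  obtain ⟨δCR, hδCR, hCRball⟩ := Metric.eventually_nhds_iff_ball.1 hCR
  set δ0 : ℝ := min (min δ1 δΨ) (min (min δnorm δreal) δCR) with hδ0def
  have hδ0pos : 0 < δ0 := by
    simp only [hδ0def, lt_min_iff]
    exact ⟨⟨hδ1, hδΨ⟩, ⟨hδnorm, hδreal⟩, hδCR⟩
  have hδ0le1 : δ0 ≤ δ1 := le_trans (min_le_left _ _) (min_le_left _ _)
  have hδ0leΨ : δ0 ≤ δΨ := le_trans (min_le_left _ _) (min_le_right _ _)
  have hδ0lenorm : δ0 ≤ δnorm :=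
    le_trans (min_le_right _ _) (le_trans (min_le_left _ _) (min_le_left _ _))
  have hδ0lereal : δ0 ≤ δreal :=
    le_trans (min_le_right _ _) (le_trans (min_le_left _ _) (min_le_right _ _))
  have hδ0leCR : δ0 ≤ δCR := le_trans (min_le_right _ _) (min_le_right _ _)
  set Rτ : ℝ := δ0 / 2 with hRτdef
  have hRτpos : 0 < Rτ := by positivity
  -- uniform continuity of the defect r y - y.2.2 near 0
  have hsmall : ∃ δA > 0, δA ≤ δ0 / 2 ∧ ∀ ζ : Fin (n - 2) → ℂ, ‖ζ‖ < δA →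
      ∀ τ : ℂ × ℂ, ‖τ‖ < Rτ → ‖r (ζ, star ζ, τ) - τ‖ ≤ Rτ / 100 := by
    set u : (Fin (n - 2) → ℂ) × (Fin (n - 2) → ℂ) × (ℂ × ℂ) → ℂ × ℂ :=
      fun y => r y - y.2.2 with hudef
    have hKcomp : IsCompact (closedBall
        (0 : (Fin (n - 2) → ℂ) × (Fin (n - 2) → ℂ) × (ℂ × ℂ)) (δ0/2)) :=
      isCompact_closedBall _ _
    have hucont : ContinuousOn u (closedBall 0 (δ0/2)) := by
      intro y hy
      have hyb : y ∈ ball (0 : (Fin (n - 2) → ℂ) × (Fin (n - 2) → ℂ) × (ℂ × ℂ)) δ1 := by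
        rw [mem_closedBall_zero_iff] at hy
        rw [mem_ball_zero_iff]
        linarith
      exact ((hrball y hyb).continuousAt.sub (continuousAt_snd.comp continuousAt_snd)
        ).continuousWithinAt
    have huc := hKcomp.uniformContinuousOn_of_continuous hucont
    rw [Metric.uniformContinuousOn_iff] at huc
    obtain ⟨δA', hδA'pos, hδA'⟩ := huc (Rτ/100) (by positivity)
    refine ⟨min δA' (δ0/2), lt_min hδA'pos (by positivity), min_le_right _ _, ?_⟩
    intro ζ hζ τ hτ
    have hζ' : ‖ζ‖ < δA' := lt_of_lt_of_le hζ (min_le_left _ _)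
    have hζ2 : ‖ζ‖ ≤ δ0/2 := le_of_lt (lt_of_lt_of_le hζ (min_le_right _ _))
    have hx : ((ζ, star ζ, τ) : (Fin (n - 2) → ℂ) × (Fin (n - 2) → ℂ) × (ℂ × ℂ)) ∈
        closedBall 0 (δ0/2) := by
      rw [mem_closedBall_zero_iff, Prod.norm_def, Prod.norm_def]
      simp only
      rw [hnE ζ]
      refine max_le hζ2 (max_le hζ2 ?_)
      rw [hRτdef] at hτ
      linarith
    have hy : (((0 : Fin (n - 2) → ℂ), (0 : Fin (n - 2) → ℂ), τ) :
        (Fin (n - 2) → ℂ) × (Fin (n - 2) → ℂ) × (ℂ × ℂ)) ∈ closedBall 0 (δ0/2) := by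
      rw [mem_closedBall_zero_iff, Prod.norm_def, Prod.norm_def]
      simp only [norm_zero]
      refine max_le (by positivity) (max_le (by positivity) ?_)
      rw [hRτdef] at hτ
      linarith
    have hdist : dist ((ζ, star ζ, τ) : (Fin (n - 2) → ℂ) × (Fin (n - 2) → ℂ) × (ℂ × ℂ))
        ((0 : Fin (n - 2) → ℂ), (0 : Fin (n - 2) → ℂ), τ) < δA' := by
      rw [Prod.dist_eq, Prod.dist_eq]
      simp only [dist_self]
      rw [dist_zero_right, dist_zero_right, hnE ζ]
      refine max_lt hζ' (max_lt hζ' ?_)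
      linarith
    have := hδA' _ hx _ hy hdist
    have hu0 : u ((0 : Fin (n - 2) → ℂ), (0 : Fin (n - 2) → ℂ), τ) = 0 := by
      simp only [hudef]
      have hmem : (((0 : Fin (n - 2) → ℂ), τ) : (Fin (n - 2) → ℂ) × (ℂ × ℂ)) ∈
          ball 0 δnorm := by
        rw [mem_ball_zero_iff, Prod.norm_def]
        simp only [norm_zero]
        refine max_lt (by linarith) ?_
        rw [hRτdef] at hτ
        linarith
      have := (hnormball _ hmem).2
      simp only at this
      rw [this]
      exact sub_self τ
    rw [hu0, dist_zero_right] at this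
    have : ‖u ((ζ, star ζ, τ) : (Fin (n - 2) → ℂ) × (Fin (n - 2) → ℂ) × (ℂ × ℂ))‖ ≤ Rτ/100 :=
      le_of_lt this
    simpa only [hudef] using this
  obtain ⟨δA, hδApos, hδAle, hδAsmall⟩ := hsmall
  -- stage A : Ψ vanishes on the anti-diagonal
  have HA : ∀ ζ : Fin (n - 2) → ℂ, ‖ζ‖ < δA → ∀ τ : ℂ × ℂ, ‖τ‖ < Rτ / 2 →
      Ψ (ζ, star ζ, τ) = 0 := by
    intro ζ hζ
    have hζ0 : ‖ζ‖ < δ0 / 2 := lt_of_lt_of_le hζ hδAle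
    have hmemY : ∀ τ : ℂ × ℂ, ‖τ‖ < Rτ →
        (((ζ, star ζ, τ)) : (Fin (n - 2) → ℂ) × (Fin (n - 2) → ℂ) × (ℂ × ℂ)) ∈
          ball 0 δ0 := by
      intro τ hτ
      rw [mem_ball_zero_iff, Prod.norm_def, Prod.norm_def]
      simp only
      rw [hnE ζ]
      refine max_lt (by linarith) (max_lt (by linarith) ?_)
      rw [hRτdef] at hτ
      linarith
    have hdiffparam : ∀ τ : ℂ × ℂ, DifferentiableAt ℂ (fun τ : ℂ × ℂ =>
        ((ζ, star ζ, τ) : (Fin (n - 2) → ℂ) × (Fin (n - 2) → ℂ) × (ℂ × ℂ))) τ :=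
      fun τ => (differentiableAt_const _).prodMk
        ((differentiableAt_const _).prodMk differentiableAt_id)
    have hAd : DifferentiableOn ℂ (fun τ : ℂ × ℂ => r (ζ, star ζ, τ)) (ball 0 Rτ) := by
      intro τ hτ
      have hy : ((ζ, star ζ, τ) : (Fin (n - 2) → ℂ) × (Fin (n - 2) → ℂ) × (ℂ × ℂ)) ∈
          ball 0 δ1 := ball_subset_ball hδ0le1 (hmemY τ (mem_ball_zero_iff.1 hτ))
      exact ((hrball _ hy).comp τ (hdiffparam τ)).differentiableWithinAt
    have hhd : DifferentiableOn ℂ (fun τ : ℂ × ℂ => Ψ (ζ, star ζ, τ)) (ball 0 Rτ) := by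
      intro τ hτ
      have hy : ((ζ, star ζ, τ) : (Fin (n - 2) → ℂ) × (Fin (n - 2) → ℂ) × (ℂ × ℂ)) ∈
          ball 0 δΨ := ball_subset_ball hδ0leΨ (hmemY τ (mem_ball_zero_iff.1 hτ))
      exact ((hΨball _ hy).comp τ (hdiffparam τ)).differentiableWithinAt
    have hinvA : ∀ τ : ℂ × ℂ, ‖τ‖ < Rτ →
        r (ζ, star ζ, star (r (ζ, star ζ, τ))) = star τ := by
      intro τ hτ
      have hp : ((ζ, star ζ, star τ) : (Fin (n - 2) → ℂ) × (Fin (n - 2) → ℂ) × (ℂ × ℂ)) ∈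
          ball 0 δreal := by
        refine ball_subset_ball hδ0lereal (hmemY (star τ) ?_)
        rw [hnW]
        exact hτ
      have := hrealball _ hp
      simp only [star_star] at this
      exact this
    have hsmallA : ∀ τ : ℂ × ℂ, ‖τ‖ < Rτ → ‖r (ζ, star ζ, τ) - τ‖ ≤ Rτ / 100 :=
      hδAsmall ζ hζ
    have hvanA : ∀ τ : ℂ × ℂ, ‖τ‖ < Rτ → r (ζ, star ζ, τ) = star τ →
        Ψ (ζ, star ζ, τ) = 0 := by
      intro τ hτ hfix
      have hp : ((ζ, star τ) : (Fin (n - 2) → ℂ) × (ℂ × ℂ)) ∈ ball 0 δCR := by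
        rw [mem_ball_zero_iff, Prod.norm_def]
        simp only
        rw [hnW]
        rw [hRτdef] at hτ
        refine max_lt (by linarith) (by linarith)
      have hprem : ((ζ, star τ) : (Fin (n - 2) → ℂ) × (ℂ × ℂ)).2 =
          r (((ζ, star τ) : (Fin (n - 2) → ℂ) × (ℂ × ℂ)).1,
            star ((ζ, star τ) : (Fin (n - 2) → ℂ) × (ℂ × ℂ)).1,
            star ((ζ, star τ) : (Fin (n - 2) → ℂ) × (ℂ × ℂ)).2) := by
        simp only
        rw [star_star]
        exact hfix.symm
      have hcr := hCRball _ hp hprem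
      simp only [hΨdef, hG'def]
      rw [hfix]
      have hsp : star ((star ζ, τ) : (Fin (n - 2) → ℂ) × (ℂ × ℂ)) =
          ((ζ, star τ) : (Fin (n - 2) → ℂ) × (ℂ × ℂ)) := by
        show (star (star ζ), star τ) = _
        rw [star_star]
      rw [hsp, sub_eq_zero]
      exact hcr
    exact fun τ hτ => stageA hRτpos (by positivity) (le_refl _) hAd hhd hinvA hsmallA hvanA τ hτ
  -- stage B : propagate from the anti-diagonal to the full complexification
  have HB : ∀ ζ χ : Fin (n - 2) → ℂ, ‖ζ‖ < δA / 4 → ‖χ‖ < δA / 4 →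
      ∀ τ : ℂ × ℂ, ‖τ‖ < Rτ / 2 → Ψ (ζ, χ, τ) = 0 := by
    intro ζ χ hζ hχ τ hτ
    set RB : ℝ := δA / 2 with hRBdef
    have hRBpos : 0 < RB := by positivity
    set G : ((Fin (n - 2) ⊕ Fin (n - 2)) → ℂ) → ℂ := fun w =>
      Ψ ((fun j => w (Sum.inl j) + Complex.I * w (Sum.inr j)),
         (fun j => w (Sum.inl j) - Complex.I * w (Sum.inr j)), τ) with hGdef
    have hvec1 : ∀ w : (Fin (n - 2) ⊕ Fin (n - 2)) → ℂ,
        ‖(fun j => w (Sum.inl j) + Complex.I * w (Sum.inr j) : Fin (n - 2) → ℂ)‖ ≤ 2 * ‖w‖ := by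
      intro w
      apply pi_norm_le_iff_of_nonneg (by positivity) |>.2
      intro j
      calc ‖w (Sum.inl j) + Complex.I * w (Sum.inr j)‖
          ≤ ‖w (Sum.inl j)‖ + ‖Complex.I * w (Sum.inr j)‖ := norm_add_le _ _
        _ = ‖w (Sum.inl j)‖ + ‖w (Sum.inr j)‖ := by
            rw [norm_mul, Complex.norm_I, one_mul]
        _ ≤ ‖w‖ + ‖w‖ := add_le_add (norm_le_pi_norm w _) (norm_le_pi_norm w _)
        _ = 2 * ‖w‖ := by ring
    have hvec2 : ∀ w : (Fin (n - 2) ⊕ Fin (n - 2)) → ℂ,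
        ‖(fun j => w (Sum.inl j) - Complex.I * w (Sum.inr j) : Fin (n - 2) → ℂ)‖ ≤ 2 * ‖w‖ := by
      intro w
      apply pi_norm_le_iff_of_nonneg (by positivity) |>.2
      intro j
      calc ‖w (Sum.inl j) - Complex.I * w (Sum.inr j)‖
          ≤ ‖w (Sum.inl j)‖ + ‖Complex.I * w (Sum.inr j)‖ := norm_sub_le _ _
        _ = ‖w (Sum.inl j)‖ + ‖w (Sum.inr j)‖ := by
            rw [norm_mul, Complex.norm_I, one_mul]
        _ ≤ ‖w‖ + ‖w‖ := add_le_add (norm_le_pi_norm w _) (norm_le_pi_norm w _)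
        _ = 2 * ‖w‖ := by ring
    have hGdiff : DifferentiableOn ℂ G (ball 0 RB) := by
      intro w hw
      rw [mem_ball_zero_iff] at hw
      have hproj : ∀ i : Fin (n - 2) ⊕ Fin (n - 2), DifferentiableAt ℂ
          (fun w : (Fin (n - 2) ⊕ Fin (n - 2)) → ℂ => w i) w := fun i =>
        (ContinuousLinearMap.proj (R := ℂ) (φ := fun _ : Fin (n - 2) ⊕ Fin (n - 2) => ℂ)
          i).differentiableAt
      have h1 : DifferentiableAt ℂ (fun w : (Fin (n - 2) ⊕ Fin (n - 2)) → ℂ =>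
          (fun j => w (Sum.inl j) + Complex.I * w (Sum.inr j) : Fin (n - 2) → ℂ)) w := by
        rw [differentiableAt_pi]
        intro j
        exact (hproj (Sum.inl j)).add ((hproj (Sum.inr j)).const_mul _)
      have h2 : DifferentiableAt ℂ (fun w : (Fin (n - 2) ⊕ Fin (n - 2)) → ℂ =>
          (fun j => w (Sum.inl j) - Complex.I * w (Sum.inr j) : Fin (n - 2) → ℂ)) w := by
        rw [differentiableAt_pi]
        intro j
        exact (hproj (Sum.inl j)).sub ((hproj (Sum.inr j)).const_mul _)
      have hmem : (((fun j => w (Sum.inl j) + Complex.I * w (Sum.inr j)),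
          (fun j => w (Sum.inl j) - Complex.I * w (Sum.inr j)), τ) :
          (Fin (n - 2) → ℂ) × (Fin (n - 2) → ℂ) × (ℂ × ℂ)) ∈ ball 0 δΨ := by
        rw [mem_ball_zero_iff, Prod.norm_def, Prod.norm_def]
        simp only
        have b1 := hvec1 w
        have b2 := hvec2 w
        have hδA0 : δA ≤ δ0 / 2 := hδAle
        refine max_lt ?_ (max_lt ?_ ?_)
        · calc ‖_‖ ≤ 2 * ‖w‖ := b1
            _ < 2 * RB := by linarith
            _ = δA := by rw [hRBdef]; ring
            _ ≤ δ0 / 2 := hδA0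
            _ < δΨ := by linarith
        · calc ‖_‖ ≤ 2 * ‖w‖ := b2
            _ < 2 * RB := by linarith
            _ = δA := by rw [hRBdef]; ring
            _ ≤ δ0 / 2 := hδA0
            _ < δΨ := by linarith
        · rw [hRτdef] at hτ
          calc ‖τ‖ < Rτ / 2 := hτ
            _ < δΨ := by rw [hRτdef]; linarith
      exact ((hΨball _ hmem).comp w (h1.prodMk (h2.prodMk (differentiableAt_const τ)))
        ).differentiableWithinAt
    have hGreal : ∀ w ∈ ball (0 : (Fin (n - 2) ⊕ Fin (n - 2)) → ℂ) RB,
        (∀ i, ∃ x : ℝ, w i = x) → G w = 0 := by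
      intro w hw hreal
      rw [mem_ball_zero_iff] at hw
      set a : Fin (n - 2) → ℂ := fun j => w (Sum.inl j) + Complex.I * w (Sum.inr j) with hadef
      have hstar : (fun j => w (Sum.inl j) - Complex.I * w (Sum.inr j) : Fin (n - 2) → ℂ)
          = star a := by
        funext j
        show _ = star (a j)
        rw [hadef]
        obtain ⟨x, hx⟩ := hreal (Sum.inl j)
        obtain ⟨y, hy⟩ := hreal (Sum.inr j)
        simp only [hx, hy, Complex.star_def, map_add, map_mul, Complex.conj_ofReal,
          Complex.conj_I]
        ring
      have hnorma : ‖a‖ < δA := by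
        calc ‖a‖ ≤ 2 * ‖w‖ := hvec1 w
          _ < 2 * RB := by linarith
          _ = δA := by rw [hRBdef]; ring
      rw [hGdef]
      simp only
      rw [hstar]
      exact HA a hnorma τ hτ
    have hGzero := flat_pi hRBpos hGdiff hGreal
    -- decode
    set w : (Fin (n - 2) ⊕ Fin (n - 2)) → ℂ :=
      Sum.elim (fun j => (ζ j + χ j) / 2) (fun j => (ζ j - χ j) / (2 * Complex.I)) with hwdef
    have hwmem : w ∈ ball (0 : (Fin (n - 2) ⊕ Fin (n - 2)) → ℂ) RB := by
      rw [mem_ball_zero_iff]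
      rw [pi_norm_lt_iff hRBpos]
      intro i
      cases i with
      | inl j =>
        show ‖(ζ j + χ j) / 2‖ < RB
        have h1 : ‖ζ j‖ ≤ ‖ζ‖ := norm_le_pi_norm ζ j
        have h2 : ‖χ j‖ ≤ ‖χ‖ := norm_le_pi_norm χ j
        rw [norm_div]
        have : ‖(2:ℂ)‖ = 2 := by norm_num
        rw [this]
        have := norm_add_le (ζ j) (χ j)
        rw [hRBdef]
        have hδA4 : ‖ζ j‖ + ‖χ j‖ < δA / 2 := by linarith
        linarith
      | inr j =>
        show ‖(ζ j - χ j) / (2 * Complex.I)‖ < RB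
        have h1 : ‖ζ j‖ ≤ ‖ζ‖ := norm_le_pi_norm ζ j
        have h2 : ‖χ j‖ ≤ ‖χ‖ := norm_le_pi_norm χ j
        rw [norm_div]
        have : ‖2 * Complex.I‖ = 2 := by
          rw [norm_mul, Complex.norm_I, mul_one]
          norm_num
        rw [this]
        have := norm_sub_le (ζ j) (χ j)
        rw [hRBdef]
        linarith
    have hz : (fun j => w (Sum.inl j) + Complex.I * w (Sum.inr j) : Fin (n - 2) → ℂ) = ζ := by
      funext j
      rw [hwdef]
      simp only [Sum.elim_inl, Sum.elim_inr]
      field_simp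
      ring
    have hx : (fun j => w (Sum.inl j) - Complex.I * w (Sum.inr j) : Fin (n - 2) → ℂ) = χ := by
      funext j
      rw [hwdef]
      simp only [Sum.elim_inl, Sum.elim_inr]
      field_simp
      ring
    have := hGzero w hwmem
    rw [hGdef] at this
    simp only at this
    rw [hz, hx] at this
    exact this
  -- conclusion 1
  have hconc1 : ∀ᶠ p in 𝓝 (0 : (Fin (n - 2) → ℂ) × (ℂ × ℂ)),
      Fn p = ρ (F' p, star (F' (0, star p.2))) := by
    have hrad : (0:ℝ) < min (δA / 4) (min (Rτ / 2) δnorm) := by positivity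
    filter_upwards [ball_mem_nhds (0 : (Fin (n - 2) → ℂ) × (ℂ × ℂ)) hrad] with p hp
    rw [mem_ball_zero_iff, Prod.norm_def] at hp
    have hp1 : ‖p.1‖ < δA / 4 := lt_of_le_of_lt (le_max_left _ _)
      (lt_of_lt_of_le hp (min_le_left _ _))
    have hp2 : ‖p.2‖ < Rτ / 2 := lt_of_le_of_lt (le_max_right _ _)
      (lt_of_lt_of_le hp (le_trans (min_le_right _ _) (min_le_left _ _)))
    have hpnorm : p ∈ ball (0 : (Fin (n - 2) → ℂ) × (ℂ × ℂ)) δnorm := by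
      rw [mem_ball_zero_iff, Prod.norm_def]
      exact lt_of_lt_of_le hp (le_trans (min_le_right _ _) (min_le_right _ _))
    have h1 := HB p.1 0 hp1 (by simpa using (by positivity : (0:ℝ) < δA / 4)) p.2 hp2
    have hr2 : r (p.1, 0, p.2) = p.2 := (hnormball p hpnorm).1
    simp only [hΨdef, hG'def] at h1
    rw [hr2] at h1
    have hstar0 : star (((0 : Fin (n - 2) → ℂ), p.2) : (Fin (n - 2) → ℂ) × (ℂ × ℂ)) =
        ((0 : Fin (n - 2) → ℂ), star p.2) := by
      show (star (0 : Fin (n - 2) → ℂ), star p.2) = _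
      rw [star_zero]
    rw [hstar0, sub_eq_zero] at h1
    simpa using h1
  refine ⟨hconc1, ?_⟩
  -- conclusion 2
  obtain ⟨δv, hδv, hvball⟩ := Metric.eventually_nhds_iff_ball.1 hρvan
  have hQcont : Filter.Tendsto (fun p : (Fin (n - 2) → ℂ) × (ℂ × ℂ) =>
      star (F' (0, star p.2))) (𝓝 0) (𝓝 0) := by
    have hF'c : ContinuousAt F' 0 := hF'.self_of_nhds.continuousAt
    have h1 : Filter.Tendsto (fun p : (Fin (n - 2) → ℂ) × (ℂ × ℂ) =>
        (((0 : Fin (n - 2) → ℂ), star p.2) : (Fin (n - 2) → ℂ) × (ℂ × ℂ))) (𝓝 0) (𝓝 0) := by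
      apply Filter.Tendsto.prodMk_nhds tendsto_const_nhds
      have : Continuous (fun p : (Fin (n - 2) → ℂ) × (ℂ × ℂ) => star p.2) :=
        continuous_star.comp continuous_snd
      simpa using this.tendsto 0
    have h2 := hF'c.tendsto.comp h1
    rw [hF'0] at h2
    have h3 : Filter.Tendsto (star : (Fin (n - 1) → ℂ) → (Fin (n - 1) → ℂ)) (𝓝 0) (𝓝 0) := by
      simpa using (continuous_star (R := Fin (n - 1) → ℂ)).tendsto 0
    exact h3.comp h2
  filter_upwards [hconc1, hQcont.eventually hρvan] with p h1 h2 hF'p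
  rw [h1, hF'p]
  exact h2
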